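/- Let m ≥ 1. The polynomial P(t) = ∏_{ε ∈ {−1,1}^m} (1 + ε_1 t_1 + ⋯ + ε_m t_m) is irreducible in the subring ℂ[t_1², …, t_m²] of ℂ[t_1, …, t_m]: if Q_1, Q_2 ∈ ℂ[x_1, …, x_m] satisfy P(t) = Q_1(t_1², …, t_m²) · Q_2(t_1², …, t_m²), then Q_1 is a constant polynomial or Q_2 is a constant polynomial. -/

import Mathlib

open MvPolynomial

/-- The sign `±1 ∈ ℂ` attached to a boolean. -/
noncomputable def signVal (b : Bool) : ℂ := if b then 1 else -1

lemma signVal_mul_self (b : Bool) : signVal b * signVal b = 1 := by cases b <;> simp [signVal]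

lemma signVal_not (b : Bool) : signVal (!b) = - signVal b := by cases b <;> simp [signVal]

lemma signVal_inj {a b : Bool} (h : signVal a = signVal b) : a = b := by
  cases a <;> cases b <;> simp_all [signVal] <;> norm_num at h

/-- The linear factor `1 + ε₁ t₁ + ⋯ + ε_m t_m`. -/
noncomputable def linF {m : ℕ} (ε : Fin m → Bool) : MvPolynomial (Fin m) ℂ :=
  1 + ∑ i, C (signVal (ε i)) * X i

lemma eval_linF {m : ℕ} (ε : Fin m → Bool) (x : Fin m → ℂ) :
    eval x (linF ε) = 1 + ∑ i, signVal (ε i) * x i := by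
  simp [linF]

lemma linF_inj {m : ℕ} {ε δ : Fin m → Bool} (h : linF ε = linF δ) : ε = δ := by
  funext i
  have := congrArg (eval (fun j => if j = i then (1:ℂ) else 0)) h
  simp only [eval_linF, mul_ite, mul_one, mul_zero] at this
  rw [Finset.sum_ite_eq' Finset.univ i, Finset.sum_ite_eq' Finset.univ i] at this
  simp at this
  exact signVal_inj this

lemma prime_X_zero (n : ℕ) : Prime (X 0 : MvPolynomial (Fin (n+1)) ℂ) := by
  rw [← MulEquiv.prime_iff (finSuccEquiv ℂ n).toRingEquiv.toMulEquiv]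
  have : (finSuccEquiv ℂ n).toRingEquiv.toMulEquiv (X 0) = Polynomial.X := finSuccEquiv_X_zero
  rw [this]
  exact Polynomial.prime_X

lemma prime_linF {n : ℕ} (ε : Fin (n+1) → Bool) : Prime (linF ε) := by
  set s : Fin (n+1) → ℂ := fun i => signVal (ε i) with hs
  have hC : (C (s 0) : MvPolynomial (Fin (n+1)) ℂ) * C (s 0) = 1 := by
    rw [← C_mul, signVal_mul_self, C_1]
  set f : MvPolynomial (Fin (n+1)) ℂ := linF ε with hf
  have hfdef : f = 1 + ∑ i, C (s i) * X i := rfl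
  set F : Fin (n+1) → MvPolynomial (Fin (n+1)) ℂ :=
    fun i => if i = 0 then X 0 + C (s 0) * (X 0 - f) else X i with hF
  set G : Fin (n+1) → MvPolynomial (Fin (n+1)) ℂ :=
    fun i => if i = 0 then X 0 + (f - X 0) else X i with hG
  have split : ∀ D : MvPolynomial (Fin (n+1)) ℂ,
      (∑ i, C (s i) * (if i = 0 then X 0 + D else X i)) = (∑ i, C (s i) * X i) + C (s 0) * D := by
    intro D
    have step : ∀ i ∈ Finset.univ, C (s i) * (if i = 0 then X 0 + D else X i)
        = C (s i) * X i + (if i = (0 : Fin (n+1)) then C (s 0) * D else 0) := by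
      intro i _
      by_cases hi : i = 0 <;> simp [hi] <;> ring
    rw [Finset.sum_congr rfl step, Finset.sum_add_distrib,
      Finset.sum_ite_eq' Finset.univ (0 : Fin (n+1))]
    simp
  have aevalf : ∀ H : Fin (n+1) → MvPolynomial (Fin (n+1)) ℂ,
      aeval H f = 1 + ∑ i, C (s i) * H i := by
    intro H; simp [hfdef, algebraMap_eq]
  have hFf : aeval F f = X 0 := by
    rw [aevalf, hF, split, ← mul_assoc, hC, one_mul, hfdef]; ring
  have hGf : aeval G f = f + C (s 0) * (f - X 0) := by
    rw [aevalf, hG, split, hfdef]; ring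
  have hG0 : G 0 = f := by
    show (if (0 : Fin (n+1)) = 0 then X 0 + (f - X 0) else X 0) = f
    rw [if_pos rfl]; ring
  have hGF : ∀ i, aeval G (F i) = X i := by
    intro i
    by_cases hi : i = 0
    · subst hi
      have hF0 : F 0 = X 0 + C (s 0) * (X 0 - f) := by simp [hF]
      rw [hF0]
      simp only [map_add, map_mul, map_sub, aeval_X, aeval_C, algebraMap_eq, hGf, hG0]
      calc f + C (s 0) * (f - (f + C (s 0) * (f - X 0)))
          = f - (C (s 0) * C (s 0)) * (f - X 0) := by ring
        _ = X 0 := by rw [hC]; ring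
    · simp [hF, hG, hi]
  have hFG : ∀ i, aeval F (G i) = X i := by
    intro i
    by_cases hi : i = 0
    · subst hi; rw [hG0]; exact hFf
    · simp [hF, hG, hi]
  let e : MvPolynomial (Fin (n+1)) ℂ ≃ₐ[ℂ] MvPolynomial (Fin (n+1)) ℂ :=
    AlgEquiv.ofAlgHom (aeval F) (aeval G)
      (MvPolynomial.algHom_ext fun i => by
        simp only [AlgHom.comp_apply, aeval_X, AlgHom.id_apply]; exact hFG i)
      (MvPolynomial.algHom_ext fun i => by
        simp only [AlgHom.comp_apply, aeval_X, AlgHom.id_apply]; exact hGF i)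
  rw [← MulEquiv.prime_iff e.toRingEquiv.toMulEquiv]
  have he : e.toRingEquiv.toMulEquiv f = X 0 := hFf
  rw [he]
  exact prime_X_zero n

lemma isUnit_eq_C : ∀ {n : ℕ} {A : MvPolynomial (Fin n) ℂ}, IsUnit A → ∃ c : ℂ, A = C c := by
  intro n
  induction n with
  | zero =>
    intro A _
    obtain ⟨c, rfl⟩ := C_surjective (Fin 0) A
    exact ⟨c, rfl⟩
  | succ n ih =>
    intro A hA
    have hu : IsUnit (finSuccEquiv ℂ n A) := hA.map (finSuccEquiv ℂ n)
    rw [Polynomial.isUnit_iff] at hu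
    obtain ⟨r, hr, hrA⟩ := hu
    obtain ⟨c, rfl⟩ := ih hr
    refine ⟨c, (finSuccEquiv ℂ n).injective ?_⟩
    rw [← hrA]
    simp [finSuccEquiv_apply]

noncomputable def flipHom {m : ℕ} (j : Fin m) :
    MvPolynomial (Fin m) ℂ →ₐ[ℂ] MvPolynomial (Fin m) ℂ :=
  aeval (fun i => if i = j then - X j else X i)

lemma flipHom_linF {m : ℕ} (j : Fin m) (ε : Fin m → Bool) :
    flipHom j (linF ε) = linF (Function.update ε j (!ε j)) := by
  simp only [flipHom, linF, map_add, map_one, map_sum, map_mul, aeval_C, aeval_X, algebraMap_eq]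
  congr 1
  apply Finset.sum_congr rfl
  intro i _
  by_cases hi : i = j
  · subst hi
    simp [Function.update_self, signVal_not, mul_comm]
  · simp [hi, Function.update_of_ne hi]

lemma flipHom_aeval_sq {m : ℕ} (j : Fin m) (Q : MvPolynomial (Fin m) ℂ) :
    flipHom j (aeval (fun i => (X i : MvPolynomial (Fin m) ℂ) ^ 2) Q) =
      aeval (fun i => (X i : MvPolynomial (Fin m) ℂ) ^ 2) Q := by
  rw [comp_aeval_apply]
  have : (fun i => flipHom j ((X i : MvPolynomial (Fin m) ℂ) ^ 2))
      = fun i => (X i : MvPolynomial (Fin m) ℂ) ^ 2 := by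
    funext i
    by_cases hi : i = j
    · subst hi; simp [flipHom]
    · simp [flipHom, hi]
  rw [this]

lemma flip_closure {m : ℕ} (S : (Fin m → Bool) → Prop)
    (hflip : ∀ (j : Fin m) (ε), S ε → S (Function.update ε j (!ε j))) :
    ∀ (d : Finset (Fin m)) (ε δ : Fin m → Bool), S ε → (∀ i, ε i ≠ δ i → i ∈ d) → S δ := by
  intro d
  induction d using Finset.induction with
  | empty =>
    intro ε δ hε hsub
    have : ε = δ := by
      funext i
      by_contra hi
      exact absurd (hsub i hi) (Finset.notMem_empty i)
    exact this ▸ hε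
  | @insert a d hnd ih =>
    intro ε δ hε hsub
    have hS' : S (Function.update ε a (δ a)) := by
      by_cases hh : ε a = δ a
      · rw [← hh, Function.update_eq_self]; exact hε
      · have : δ a = !ε a := by
          cases hεa : ε a <;> cases hδa : δ a <;> simp_all
        rw [this]; exact hflip a ε hε
    apply ih _ δ hS'
    intro i hi
    have hia : i ≠ a := by
      intro hia; subst hia
      exact hi (Function.update_self i (δ i) ε)
    rw [Function.update_of_ne hia] at hi
    rcases Finset.mem_insert.mp (hsub i hi) with h | h
    · exact absurd h hia
    · exact h

lemma eval_aeval_sq {m : ℕ} (z : Fin m → ℂ) (Q : MvPolynomial (Fin m) ℂ) :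
    eval z (aeval (fun i => (X i : MvPolynomial (Fin m) ℂ) ^ 2) Q) =
      eval (fun i => z i ^ 2) Q := by
  have : (eval z).comp
      ((aeval (fun i => (X i : MvPolynomial (Fin m) ℂ) ^ 2) :
        MvPolynomial (Fin m) ℂ →ₐ[ℂ] MvPolynomial (Fin m) ℂ) : _ →+* _)
      = eval (fun i => z i ^ 2) := by
    apply ringHom_ext <;> intros <;> simp
  exact RingHom.congr_fun this Q

lemma aeval_sq_eq_C {m : ℕ} {Q : MvPolynomial (Fin m) ℂ} {c : ℂ}
    (h : aeval (fun i => (X i : MvPolynomial (Fin m) ℂ) ^ 2) Q = C c) : Q = C c := by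
  apply MvPolynomial.funext
  intro y
  choose z hz using fun i => IsAlgClosed.exists_pow_nat_eq (y i) (n := 2) (by norm_num)
  have h2 := congrArg (eval z) h
  rw [eval_aeval_sq] at h2
  have hy : (fun i => z i ^ 2) = y := funext hz
  rw [hy] at h2
  simpa using h2

/-- the polynomial `P(t) = ∏_ε (1 + ε_1 t_1 + ⋯ + ε_m t_m)` is
irreducible in the subring `ℂ[t_1^2, …, t_m^2]` of `ℂ[t_1, …, t_m]`: if
`P(t) = Q_1(t^2) · Q_2(t^2)` then `Q_1` or `Q_2` is a constant polynomial. -/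
theorem lauricella_sing_irreducible_in_square_subring (m : ℕ) (hm : 1 ≤ m)
    (Q₁ Q₂ : MvPolynomial (Fin m) ℂ)
    (h : (∏ ε : Fin m → Bool, (1 + ∑ i, C (signVal (ε i)) * X i)) =
      aeval (fun i : Fin m => (X i : MvPolynomial (Fin m) ℂ) ^ 2) Q₁ *
      aeval (fun i : Fin m => (X i : MvPolynomial (Fin m) ℂ) ^ 2) Q₂) :
    (∃ c : ℂ, Q₁ = C c) ∨ (∃ c : ℂ, Q₂ = C c) := by
  obtain ⟨n, rfl⟩ : ∃ n, m = n + 1 := ⟨m - 1, (Nat.succ_pred_eq_of_pos hm).symm⟩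
  by_contra hcon
  push_neg at hcon
  obtain ⟨h1, h2⟩ := hcon
  set A := aeval (fun i : Fin (n+1) => (X i : MvPolynomial (Fin (n+1)) ℂ) ^ 2) Q₁ with hA
  set B := aeval (fun i : Fin (n+1) => (X i : MvPolynomial (Fin (n+1)) ℂ) ^ 2) Q₂ with hB
  have hP : (∏ ε : Fin (n+1) → Bool, linF ε) = A * B := h
  have hPne : (∏ ε : Fin (n+1) → Bool, linF ε) ≠ 0 :=
    Finset.prod_ne_zero_iff.mpr fun ε _ => (prime_linF ε).ne_zero
  have hA0 : A ≠ 0 := fun h0 => hPne (by rw [hP, h0, zero_mul])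
  have hB0 : B ≠ 0 := fun h0 => hPne (by rw [hP, h0, mul_zero])
  have hAnu : ¬IsUnit A := by
    intro hu
    obtain ⟨c, hc⟩ := isUnit_eq_C hu
    exact h1 c (aeval_sq_eq_C (hA ▸ hc))
  have hBnu : ¬IsUnit B := by
    intro hu
    obtain ⟨c, hc⟩ := isUnit_eq_C hu
    exact h2 c (aeval_sq_eq_C (hB ▸ hc))
  -- every nonzero nonunit has an irreducible (hence prime) factor
  obtain ⟨p, hpirr, hpA⟩ := WfDvdMonoid.exists_irreducible_factor hAnu hA0
  obtain ⟨q, hqirr, hqB⟩ := WfDvdMonoid.exists_irreducible_factor hBnu hB0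
  have hpprime : Prime p := UniqueFactorizationMonoid.irreducible_iff_prime.mp hpirr
  have hqprime : Prime q := UniqueFactorizationMonoid.irreducible_iff_prime.mp hqirr
  -- p divides the product of the linear factors, hence is associated to one of them
  have hpd : p ∣ ∏ ε : Fin (n+1) → Bool, linF ε := hP ▸ hpA.trans (Dvd.intro B rfl)
  have hqd : q ∣ ∏ ε : Fin (n+1) → Bool, linF ε := hP ▸ hqB.trans (Dvd.intro_left A rfl)
  obtain ⟨ε₀, -, hpε⟩ := hpprime.exists_mem_finset_dvd hpd
  obtain ⟨δ₀, -, hqδ⟩ := hqprime.exists_mem_finset_dvd hqd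
  have hε₀A : linF ε₀ ∣ A :=
    ((hpirr.associated_of_dvd (prime_linF ε₀).irreducible hpε).symm.dvd).trans hpA
  have hδ₀B : linF δ₀ ∣ B :=
    ((hqirr.associated_of_dvd (prime_linF δ₀).irreducible hqδ).symm.dvd).trans hqB
  -- the set of linear factors dividing A is closed under sign flips
  have hflip : ∀ (j : Fin (n+1)) (ε), linF ε ∣ A → linF (Function.update ε j (!ε j)) ∣ A := by
    intro j ε hd
    have := map_dvd (flipHom j) hd
    rwa [flipHom_linF, hA, flipHom_aeval_sq] at this
  have hδ₀A : linF δ₀ ∣ A :=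
    flip_closure (fun ε => linF ε ∣ A) hflip Finset.univ ε₀ δ₀ hε₀A
      (fun i _ => Finset.mem_univ i)
  -- so (linF δ₀)^2 divides the product, contradicting squarefreeness
  have hsq : linF δ₀ * linF δ₀ ∣ ∏ ε : Fin (n+1) → Bool, linF ε := by
    rw [hP]; exact mul_dvd_mul hδ₀A hδ₀B
  rw [← Finset.mul_prod_erase Finset.univ linF (Finset.mem_univ δ₀)] at hsq
  have hd2 : linF δ₀ ∣ ∏ ε ∈ Finset.univ.erase δ₀, linF ε :=
    (mul_dvd_mul_iff_left (prime_linF δ₀).ne_zero).mp hsq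
  obtain ⟨ε₁, hε₁mem, hdvd⟩ := (prime_linF δ₀).exists_mem_finset_dvd hd2
  have hassoc : Associated (linF δ₀) (linF ε₁) :=
    (prime_linF δ₀).irreducible.associated_of_dvd (prime_linF ε₁).irreducible hdvd
  obtain ⟨u, hu⟩ := hassoc
  obtain ⟨c, hc⟩ := isUnit_eq_C u.isUnit
  have hc1 : c = 1 := by
    have := congrArg (eval (fun _ => (0:ℂ))) hu
    rw [eval_mul, eval_linF, eval_linF, hc] at this
    simpa using this
  have heq : linF δ₀ = linF ε₁ := by
    rw [← hu, hc, hc1, C_1, mul_one]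
  exact (Finset.mem_erase.mp hε₁mem).1 (linF_inj heq).symm
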